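/- Let p be an odd prime. For every h ∈ {0, 1, …, p−1}, the vector v1 + γ1·(1 + γ2 + ⋯ + γ2^{h−1})·v2 lies in the image of the linear map given by multiplication by γ1·γ2^h − 1 on (ℤ/p²ℤ)^{p−1}, and the vector v2 lies in the image of the linear map given by multiplication by γ2 − 1 on (ℤ/p²ℤ)^{p−1}. -/
import Mathlib


/-- The matrix `γ1 ∈ GL_{p-1}(ℤ/p²ℤ)`: the `(i+1, i)`-entry equals `1` for
`1 ≤ i ≤ p-2` (one-based indexing), all entries of the last column equal `-1`, and all
other entries are `0`; this is the companion matrix of `x^{p-1} + ⋯ + x + 1`. -/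
def gamma1 (p : ℕ) : Matrix (Fin (p - 1)) (Fin (p - 1)) (ZMod (p ^ 2)) :=
  fun i j => if (j : ℕ) = p - 2 then -1 else if (i : ℕ) = (j : ℕ) + 1 then 1 else 0

/-- The matrix `γ2 = (p+1)·Id ∈ GL_{p-1}(ℤ/p²ℤ)`. -/
def gamma2 (p : ℕ) : Matrix (Fin (p - 1)) (Fin (p - 1)) (ZMod (p ^ 2)) :=
  ((p : ZMod (p ^ 2)) + 1) • 1

/-- The vector `v1 = (p-1, 0, …, 0, 1)ᵀ ∈ (ℤ/p²ℤ)^{p-1}`. -/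
def v1 (p : ℕ) : Fin (p - 1) → ZMod (p ^ 2) :=
  fun i => if (i : ℕ) = 0 then (p : ZMod (p ^ 2)) - 1
    else if (i : ℕ) = p - 2 then 1 else 0

/-- The vector `v2 = (p, p, …, p, 0)ᵀ ∈ (ℤ/p²ℤ)^{p-1}`. -/
def v2 (p : ℕ) : Fin (p - 1) → ZMod (p ^ 2) :=
  fun i => if (i : ℕ) = p - 2 then 0 else (p : ZMod (p ^ 2))

lemma p_sq_zero (p : ℕ) : ((p : ZMod (p ^ 2)) * p) = 0 := by
  have h : ((p ^ 2 : ℕ) : ZMod (p ^ 2)) = 0 := ZMod.natCast_self _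
  push_cast at h
  linear_combination h

lemma pow_p_add_one (p : ℕ) (k : ℕ) :
    ((p : ZMod (p ^ 2)) + 1) ^ k = 1 + (k : ZMod (p ^ 2)) * p := by
  induction k with
  | zero => simp
  | succ n ih =>
    rw [pow_succ ((p : ZMod (p ^ 2)) + 1) n, ih]
    push_cast
    linear_combination (n : ZMod (p ^ 2)) * p_sq_zero p

/-- Row formula for multiplication by `gamma1`. -/
lemma gamma1_mulVec (p : ℕ) (hp3 : 3 ≤ p) (w : Fin (p - 1) → ZMod (p ^ 2))
    (i L J : Fin (p - 1)) (hLv : (L : ℕ) = p - 2) (hJv : (J : ℕ) = (i : ℕ) - 1) :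
    (gamma1 p).mulVec w i = (if (i : ℕ) = 0 then 0 else w J) - w L := by
  have hiLt := i.isLt
  have hsplit : ∀ j : Fin (p - 1),
      (if (j : ℕ) = p - 2 then (-1 : ZMod (p ^ 2))
        else if (i : ℕ) = (j : ℕ) + 1 then 1 else 0) * w j
      = (if j = L then -(w L) else 0) + (if ¬((i : ℕ) = 0) ∧ j = J then w J else 0) := by
    intro j
    by_cases hj : (j : ℕ) = p - 2
    · have hjL : j = L := Fin.val_injective (by omega)
      subst hjL
      rw [if_pos hj, if_pos rfl, if_neg]
      · ring
      · rintro ⟨hi0, hLJ⟩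
        have := congrArg Fin.val hLJ
        omega
    · rw [if_neg hj]
      have hjL : ¬(j = L) := fun e => hj (by rw [e, hLv])
      rw [if_neg hjL]
      by_cases hij : (i : ℕ) = (j : ℕ) + 1
      · have hi0 : ¬((i : ℕ) = 0) := by omega
        have hjJ : j = J := Fin.val_injective (by omega)
        rw [if_pos hij, if_pos ⟨hi0, hjJ⟩, hjJ]
        ring
      · rw [if_neg hij, if_neg]
        · ring
        · rintro ⟨hi0, rfl⟩
          exact hij (by omega)
  show (∑ j, gamma1 p i j * w j) = _
  simp only [gamma1]
  rw [Finset.sum_congr rfl fun j _ => hsplit j, Finset.sum_add_distrib]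
  by_cases hi0 : (i : ℕ) = 0
  · simp [hi0, Finset.sum_ite_eq']
  · simp only [hi0, not_false_iff, true_and, if_neg hi0]
    rw [Finset.sum_ite_eq' Finset.univ L fun _ => -(w L),
      Finset.sum_ite_eq' Finset.univ J fun _ => w J]
    simp [sub_eq_neg_add]

lemma pc_key (p : ℕ) (hp : p.Prime) (hodd : Odd p) :
    (p : ZMod (p ^ 2)) * (((p - 3).choose 2 : ℕ) : ZMod (p ^ 2)) = 6 * p := by
  have h2 : IsUnit (2 : ZMod (p ^ 2)) := by
    have : ((2 : ℕ) : ZMod (p ^ 2)) = (2 : ZMod (p ^ 2)) := by norm_num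
    rw [← this, ZMod.isUnit_iff_coprime]
    rw [Nat.coprime_two_left]
    exact hodd.pow
  refine h2.mul_left_cancel ?_
  have hP2 := p_sq_zero p
  by_cases hp3 : p = 3
  · subst hp3; decide
  · have hp2 := hp.two_le
    have hpo := Nat.odd_iff.mp hodd
    have hp5 : 5 ≤ p := by omega
    have hch : 2 * ((p - 3).choose 2) = (p - 3) * (p - 4) := by
      rcases hq : p - 3 with _ | m
      · simp
      · rw [Nat.choose_two_right, Nat.succ_sub_one, Nat.mul_div_cancel'
          (by rw [mul_comm]; exact (Nat.even_mul_succ_self m).two_dvd)]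
        have hm : m = p - 4 := by omega
        rw [hm]
    have hc1 : (((p - 3 : ℕ)) : ZMod (p ^ 2)) = (p : ZMod (p ^ 2)) - 3 := by
      rw [Nat.cast_sub (by omega)]; norm_num
    have hc2 : (((p - 4 : ℕ)) : ZMod (p ^ 2)) = (p : ZMod (p ^ 2)) - 4 := by
      rw [Nat.cast_sub (by omega)]; norm_num
    have hcast : ((2 * ((p - 3).choose 2) : ℕ) : ZMod (p ^ 2))
        = ((p : ZMod (p ^ 2)) - 3) * ((p : ZMod (p ^ 2)) - 4) := by
      rw [hch, Nat.cast_mul, hc1, hc2]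
    push_cast at hcast
    linear_combination (p : ZMod (p ^ 2)) * hcast + ((p : ZMod (p ^ 2)) - 7) * hP2

/-- Let `p` be an odd prime. For every `h ∈ {0, 1, …, p-1}`, the
vector `v1 + γ1·(1 + γ2 + ⋯ + γ2^{h-1})·v2` lies in the image of multiplication by
`γ1·γ2^h - 1` on `(ℤ/p²ℤ)^{p-1}` (for `h = 0` the sum `1 + γ2 + ⋯ + γ2^{h-1}` is the
zero matrix), and `v2` lies in the image of multiplication by `γ2 - 1`. -/
theorem local_conditions_for_cocycle_values
    (p : ℕ) (hp : p.Prime) (hodd : Odd p) (h : ℕ) (hh : h < p) :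
    (v1 p + (gamma1 p).mulVec ((∑ k ∈ Finset.range h, gamma2 p ^ k).mulVec (v2 p)))
        ∈ Set.range (fun w : Fin (p - 1) → ZMod (p ^ 2) =>
            (gamma1 p * gamma2 p ^ h - 1).mulVec w) ∧
      v2 p ∈ Set.range (fun w : Fin (p - 1) → ZMod (p ^ 2) =>
        (gamma2 p - 1).mulVec w) := by
  have hp3 : 3 ≤ p := by
    have h2 := hp.two_le
    have := Nat.odd_iff.mp hodd
    omega
  have hP2 : (p : ZMod (p ^ 2)) * p = 0 := p_sq_zero p
  have hg2 : ∀ k : ℕ, gamma2 p ^ k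
      = (((p : ZMod (p ^ 2)) + 1) ^ k) • (1 : Matrix (Fin (p - 1)) (Fin (p - 1)) (ZMod (p ^ 2))) := by
    intro k
    rw [gamma2, smul_pow, one_pow]
  constructor
  · -- hard part
    have hsum : (∑ k ∈ Finset.range h, gamma2 p ^ k).mulVec (v2 p)
        = fun i : Fin (p - 1) => if (i : ℕ) = p - 2 then 0 else (h : ZMod (p ^ 2)) * p := by
      funext i
      simp only [hg2, ← Finset.sum_smul, Matrix.smul_mulVec, Matrix.one_mulVec,
        Pi.smul_apply, smul_eq_mul, v2]
      split_ifs with hi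
      · exact mul_zero _
      · have hterm : ∀ k ∈ Finset.range h,
            ((p : ZMod (p ^ 2)) + 1) ^ k * (p : ZMod (p ^ 2)) = (p : ZMod (p ^ 2)) := by
          intro k _
          rw [pow_p_add_one p k]
          linear_combination (k : ZMod (p ^ 2)) * hP2
        rw [Finset.sum_mul, Finset.sum_congr rfl hterm, Finset.sum_const,
          Finset.card_range, nsmul_eq_mul]
    refine ⟨fun i => if (i : ℕ) = p - 2 then (p : ZMod (p ^ 2)) - 1
      else 2 - 2 * p - ((p : ZMod (p ^ 2)) - 1) * ((i : ℕ) : ZMod (p ^ 2))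
        + (h : ZMod (p ^ 2)) * p * (1 + 2 * ((i : ℕ) : ZMod (p ^ 2))
            + (((i : ℕ).choose 2 : ℕ) : ZMod (p ^ 2))), ?_⟩
    show (gamma1 p * gamma2 p ^ h - 1).mulVec _ = _
    rw [hsum]
    funext i
    have hiLt := i.isLt
    have hL2 : p - 2 < p - 1 := by omega
    have hJ2 : (i : ℕ) - 1 < p - 1 := by omega
    rw [Matrix.sub_mulVec, hg2 h, Matrix.mul_smul, mul_one, Matrix.smul_mulVec,
      Matrix.one_mulVec, pow_p_add_one p h]
    simp only [Pi.add_apply, Pi.sub_apply, Pi.smul_apply, smul_eq_mul]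
    rw [gamma1_mulVec p hp3 _ i ⟨p - 2, hL2⟩ ⟨(i : ℕ) - 1, hJ2⟩ rfl rfl,
      gamma1_mulVec p hp3 _ i ⟨p - 2, hL2⟩ ⟨(i : ℕ) - 1, hJ2⟩ rfl rfl]
    by_cases hi0 : (i : ℕ) = 0
    · -- row 0
      have f1 : ¬((i : ℕ) = p - 2) := by omega
      have f2 : ¬((0 : ℕ) = p - 2) := by omega
      have f3 : Nat.choose 0 2 = 0 := by norm_num
      simp only [v1, Fin.val_mk, hi0, f1, f2, f3, eq_self_iff_true, if_true, if_false,
        Nat.cast_zero]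
      push_cast
      linear_combination (-(h : ZMod (p ^ 2))) * hP2
    · by_cases hiL : (i : ℕ) = p - 2
      · -- last row
        have f0 : ¬((p - 2 : ℕ) = 0) := by omega
        have f1 : ¬((p - 2 - 1 : ℕ) = p - 2) := by omega
        have f2 : (p - 2 - 1 : ℕ) = p - 3 := by omega
        have hc1 : (((p - 3 : ℕ)) : ZMod (p ^ 2)) = (p : ZMod (p ^ 2)) - 3 := by
          rw [Nat.cast_sub (by omega)]; norm_num
        have f4 : ¬((p - 3 : ℕ) = p - 2) := by omega
        simp only [v1, Fin.val_mk, hiL, f2, f0, f1, f4, hc1, eq_self_iff_true,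
          if_true, if_false]
        push_cast
        linear_combination (h : ZMod (p ^ 2)) * pc_key p hp hodd
          + (-1 + 3 * (h : ZMod (p ^ 2)) - 5 * (h : ZMod (p ^ 2)) ^ 2
              + (h : ZMod (p ^ 2)) ^ 2 * (((p - 3).choose 2 : ℕ) : ZMod (p ^ 2))
              - (h : ZMod (p ^ 2)) * p + 2 * (h : ZMod (p ^ 2)) ^ 2 * p) * hP2
      · -- middle rows
        obtain ⟨m, hm⟩ : ∃ m, (i : ℕ) = m + 1 := ⟨(i : ℕ) - 1, by omega⟩
        have f1 : ¬((m : ℕ) = p - 2) := by omega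
        have f2 : ¬((m + 1 : ℕ) = p - 2) := by omega
        have f3 : ¬((m + 1 : ℕ) = 0) := by omega
        have hch : (m + 1).choose 2 = m.choose 2 + m := by
          rw [Nat.choose_succ_succ, Nat.choose_one_right, Nat.add_comm]
        simp only [v1, Fin.val_mk, hm, Nat.add_sub_cancel, if_neg f1, if_neg f2,
          if_neg f3, hch]
        push_cast
        linear_combination (-3 * (h : ZMod (p ^ 2)) - (h : ZMod (p ^ 2)) * m
          + (h : ZMod (p ^ 2)) ^ 2 + (h : ZMod (p ^ 2)) ^ 2 * ((m.choose 2 : ℕ) : ZMod (p ^ 2))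
          + 2 * (h : ZMod (p ^ 2)) ^ 2 * m) * hP2
  · -- easy part
    refine ⟨fun i => if (i : ℕ) = p - 2 then 0 else 1, ?_⟩
    have hg : gamma2 p - 1
        = (p : ZMod (p ^ 2)) • (1 : Matrix (Fin (p - 1)) (Fin (p - 1)) (ZMod (p ^ 2))) := by
      rw [gamma2, add_smul, one_smul, add_sub_cancel_right]
    show (gamma2 p - 1).mulVec _ = v2 p
    rw [hg, Matrix.smul_mulVec, Matrix.one_mulVec]
    funext i
    simp only [Pi.smul_apply, smul_eq_mul, v2]
    split_ifs <;> simp
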